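/- Fix d ≥ 2 and the action of SO₀(1,d) on pairs from Θ = {θ ∈ ℝ^{d+1} : θ₀ > √(θ₁²+⋯+θ_d²)} given by (A,(θ,θ′)) ↦ (Aθ, Aθ′). The map (θ,θ′) ↦ ([θ,θ], [θ′,θ′], [θ,θ′]) is a maximal invariant: (i) it is invariant, i.e. ([Aθ,Aθ],[Aθ′,Aθ′],[Aθ,Aθ′]) = ([θ,θ],[θ′,θ′],[θ,θ′]) for all A ∈ SO₀(1,d); and (ii) whenever ([θ₁,θ₁],[θ₂,θ₂],[θ₁,θ₂]) = ([θ₁′,θ₁′],[θ₂′,θ₂′],[θ₁′,θ₂′]) there exists A ∈ SO₀(1,d) with Aθ₁ = θ₁′ and Aθ₂ = θ₂′. -/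

import Mathlib

open MeasureTheory

/-- The Minkowski inner product on ℝ^{d+1}: [x,y] = x₀y₀ − x₁y₁ − ⋯ − x_d y_d. -/
noncomputable def mink {d : ℕ} (x y : Fin (d + 1) → ℝ) : ℝ :=
  x 0 * y 0 - ∑ i : Fin d, x i.succ * y i.succ

/-- The parameter space Θ = {θ : θ₀ > √(θ₁² + ⋯ + θ_d²)}. -/
def hypParam (d : ℕ) : Set (Fin (d + 1) → ℝ) :=
  {θ | Real.sqrt (∑ i : Fin d, θ i.succ ^ 2) < θ 0}

/-- The upper unit hyperboloid sheet L^d. -/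
def hypSheet (d : ℕ) : Set (Fin (d + 1) → ℝ) :=
  {x | mink x x = 1 ∧ 0 < x 0}

/-- SO₀(1,d): determinant-one matrices preserving the Minkowski inner product and
mapping the upper hyperboloid sheet onto itself. -/
def SOplus (d : ℕ) : Set (Matrix (Fin (d + 1)) (Fin (d + 1)) ℝ) :=
  {A | A.det = 1 ∧ (∀ x y, mink (A.mulVec x) (A.mulVec y) = mink x y) ∧
    A.mulVec '' hypSheet d = hypSheet d}

/-- The lift x̃ = (√(1+‖x‖²), x) of a point x ∈ ℝ^d to the hyperboloid. -/
noncomputable def hypLift {d : ℕ} (x : Fin d → ℝ) : Fin (d + 1) → ℝ :=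
  Fin.cons (Real.sqrt (1 + ∑ i, x i ^ 2)) x

/-- The unnormalized density of the hyperboloid distribution. -/
noncomputable def hypKernel {d : ℕ} (θ : Fin (d + 1) → ℝ) (x : Fin d → ℝ) : ℝ :=
  Real.exp (-mink θ (hypLift x)) / Real.sqrt (1 + ∑ i, x i ^ 2)

/-- The normalizing constant of the hyperboloid distribution. -/
noncomputable def hypZ (d : ℕ) (θ : Fin (d + 1) → ℝ) : ℝ :=
  ∫ x : Fin d → ℝ, hypKernel θ x

/-- The density of the hyperboloid distribution P_θ on ℝ^d. -/
noncomputable def hypDensity (d : ℕ) (θ : Fin (d + 1) → ℝ) (x : Fin d → ℝ) : ℝ :=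
  hypKernel θ x / hypZ d θ

/-- The hyperboloid distribution P_θ as a Borel measure on ℝ^d. -/
noncomputable def hypMeasure (d : ℕ) (θ : Fin (d + 1) → ℝ) : Measure (Fin d → ℝ) :=
  volume.withDensity fun x => ENNReal.ofReal (hypDensity d θ x)

namespace MaxInvAux

open Matrix

lemma mink_cons {d : ℕ} (a b : ℝ) (v w : Fin d → ℝ) :
    mink (Fin.cons a v) (Fin.cons b w) = a * b - ∑ i, v i * w i := by
  simp [mink]

lemma mink_split2 {n : ℕ} (x y : Fin (n + 2) → ℝ) :
    mink x y = x 0 * y 0 - x 1 * y 1 - ∑ i : Fin n, x i.succ.succ * y i.succ.succ := by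
  simp [mink, Fin.sum_univ_succ, Fin.succ_zero_eq_one]
  ring

/-- Reflection across the hyperplane orthogonal to `v`. -/
noncomputable def reflV {d : ℕ} (v : Fin d → ℝ) : Matrix (Fin d) (Fin d) ℝ :=
  Matrix.of fun i j => (if i = j then (1 : ℝ) else 0) - (2 / ∑ k, v k ^ 2) * v i * v j

lemma reflV_mulVec {d : ℕ} (v x : Fin d → ℝ) :
    (reflV v).mulVec x = fun i => x i - (2 / ∑ k, v k ^ 2) * (∑ k, v k * x k) * v i := by
  funext i
  simp only [reflV, Matrix.mulVec, dotProduct, Matrix.of_apply]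
  have h : ∀ j ∈ Finset.univ, ((if i = j then (1 : ℝ) else 0) - (2 / ∑ k, v k ^ 2) * v i * v j) * x j
      = (if i = j then x j else 0) - (2 / ∑ k, v k ^ 2) * v i * (v j * x j) := by
    intro j _; split <;> ring
  rw [Finset.sum_congr rfl h, Finset.sum_sub_distrib, Finset.sum_ite_eq, ← Finset.mul_sum]
  simp
  ring

lemma reflV_inner {d : ℕ} (v : Fin d → ℝ) (hs : (∑ k, v k ^ 2) ≠ 0) (x y : Fin d → ℝ) :
    ∑ i, (reflV v).mulVec x i * (reflV v).mulVec y i = ∑ i, x i * y i := by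
  rw [reflV_mulVec, reflV_mulVec]
  set s := ∑ k, v k ^ 2 with hsdef
  set a := ∑ k, v k * x k with hadef
  set b := ∑ k, v k * y k with hbdef
  have h : ∀ i ∈ Finset.univ, (x i - 2 / s * a * v i) * (y i - 2 / s * b * v i)
      = x i * y i - (2 / s * a) * (v i * y i) - (2 / s * b) * (v i * x i)
        + ((2 / s * a) * (2 / s * b)) * v i ^ 2 := by
    intro i _; ring
  rw [Finset.sum_congr rfl h]
  rw [Finset.sum_add_distrib, Finset.sum_sub_distrib, Finset.sum_sub_distrib,
    ← Finset.mul_sum, ← Finset.mul_sum, ← Finset.mul_sum, ← hsdef, ← hbdef]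
  have hxv : ∑ i, v i * x i = a := rfl
  rw [hxv]
  field_simp
  ring

lemma reflV_det {d : ℕ} (v : Fin d → ℝ) (hs : (∑ k, v k ^ 2) ≠ 0) :
    (reflV v).det = -1 := by
  have h : reflV v = 1 + Matrix.replicateCol Unit (fun i => (-(2 / ∑ k, v k ^ 2)) * v i) * Matrix.replicateRow Unit v := by
    ext i j
    simp [reflV, Matrix.mul_apply, Matrix.replicateCol, Matrix.replicateRow, Matrix.one_apply]
    ring
  rw [h, Matrix.det_one_add_replicateCol_mul_replicateRow]
  have : (v ⬝ᵥ fun i => (-(2 / ∑ k, v k ^ 2)) * v i) = -(2 / ∑ k, v k ^ 2) * ∑ k, v k ^ 2 := by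
    simp only [dotProduct]
    rw [Finset.mul_sum]
    refine Finset.sum_congr rfl fun i _ => by ring
  rw [this]
  field_simp
  ring

lemma sum_sq_ne_zero {d : ℕ} {v : Fin d → ℝ} (hv : v ≠ 0) : (∑ k, v k ^ 2) ≠ 0 := by
  intro h
  apply hv
  funext i
  have := (Finset.sum_eq_zero_iff_of_nonneg (fun k _ => sq_nonneg (v k))).1 h i (Finset.mem_univ i)
  have := sq_eq_zero_iff.1 this
  simpa using this

/-- SO(d) acts transitively: any vector can be rotated to `‖x‖ • e₀`. -/
lemma exists_rot {d : ℕ} (x : Fin (d + 2) → ℝ) :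
    ∃ R : Matrix (Fin (d + 2)) (Fin (d + 2)) ℝ, R.det = 1 ∧
      (∀ a b : Fin (d + 2) → ℝ, ∑ i, R.mulVec a i * R.mulVec b i = ∑ i, a i * b i) ∧
      R.mulVec x = Pi.single 0 (Real.sqrt (∑ i, x i ^ 2)) := by
  set r := Real.sqrt (∑ i, x i ^ 2) with hrdef
  have hr2 : r ^ 2 = ∑ i, x i ^ 2 := Real.sq_sqrt (by positivity)
  set p0 : Fin (d + 2) → ℝ := Pi.single 0 r with hp0def
  by_cases hx : x = p0
  · refine ⟨1, Matrix.det_one, by simp, by rw [Matrix.one_mulVec, hx]⟩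
  · set v := x - p0 with hvdef
    have hv : v ≠ 0 := sub_ne_zero_of_ne hx
    have hsv : (∑ k, v k ^ 2) ≠ 0 := sum_sq_ne_zero hv
    have hsingle_sq : ∑ k, p0 k ^ 2 = r ^ 2 := by
      rw [Finset.sum_eq_single 0]
      · simp [hp0def]
      · intro b _ hb; simp [hp0def, Pi.single_apply, hb]
      · simp
    have hsingle_x : ∑ k, p0 k * x k = r * x 0 := by
      rw [Finset.sum_eq_single 0]
      · simp [hp0def]
      · intro b _ hb; simp [hp0def, Pi.single_apply, hb]
      · simp
    have hxx : ∑ k, x k * x k = r ^ 2 := by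
      rw [hr2]; exact Finset.sum_congr rfl fun i _ => (pow_two (x i)).symm
    have hvx : ∑ k, v k * x k = r ^ 2 - r * x 0 := by
      simp only [hvdef, Pi.sub_apply, sub_mul]
      rw [Finset.sum_sub_distrib, hsingle_x, hxx]
    have hvv : ∑ k, v k ^ 2 = 2 * (r ^ 2 - r * x 0) := by
      have h1 : ∀ k ∈ Finset.univ, v k ^ 2 = x k * x k - 2 * (p0 k * x k) + p0 k ^ 2 := by
        intro k _; simp only [hvdef, Pi.sub_apply]; ring
      rw [Finset.sum_congr rfl h1, Finset.sum_add_distrib, Finset.sum_sub_distrib,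
        ← Finset.mul_sum, hsingle_sq, hsingle_x, hxx]
      ring
    have hrefl : (reflV v).mulVec x = p0 := by
      rw [reflV_mulVec]
      funext i
      rw [hvx, hvv]
      have hco : 2 / (2 * (r ^ 2 - r * x 0)) * (r ^ 2 - r * x 0) = 1 := by
        rw [hvv] at hsv
        have : r ^ 2 - r * x 0 ≠ 0 := fun h => hsv (by rw [h]; ring)
        rw [div_mul_eq_mul_div, div_eq_one_iff_eq (mul_ne_zero two_ne_zero this)]
      rw [hco, one_mul]
      simp [hvdef]
    set u : Fin (d + 2) → ℝ := Pi.single 1 1 with hudef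
    have hsu : (∑ k, u k ^ 2) = 1 := by
      rw [Finset.sum_eq_single 1]
      · simp [hudef]
      · intro b _ hb; simp [hudef, Pi.single_apply, hb]
      · simp
    have hsu' : (∑ k, u k ^ 2) ≠ 0 := by rw [hsu]; norm_num
    have hfix : (reflV u).mulVec p0 = p0 := by
      rw [reflV_mulVec]
      funext i
      have h2 : ∑ k, u k * p0 k = 0 := by
        refine Finset.sum_eq_zero fun k _ => ?_
        rcases eq_or_ne k 0 with rfl | hk
        · simp [hudef, Pi.single_apply]
        · simp [hp0def, Pi.single_apply, hk]
      rw [h2]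
      simp
    refine ⟨reflV u * reflV v, ?_, ?_, ?_⟩
    · rw [Matrix.det_mul, reflV_det u hsu', reflV_det v hsv]; norm_num
    · intro a b
      rw [← Matrix.mulVec_mulVec, ← Matrix.mulVec_mulVec,
        reflV_inner u hsu', reflV_inner v hsv]
    · rw [← Matrix.mulVec_mulVec, hrefl, hfix]


/-- Embed a d×d matrix as a (d+1)×(d+1) matrix fixing the time coordinate. -/
def liftMat {d : ℕ} (R : Matrix (Fin d) (Fin d) ℝ) : Matrix (Fin (d + 1)) (Fin (d + 1)) ℝ :=
  Matrix.of (Fin.cons (Fin.cons 1 0) (fun i' => Fin.cons 0 (R i')))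

lemma liftMat_mulVec {d : ℕ} (R : Matrix (Fin d) (Fin d) ℝ) (x : Fin (d + 1) → ℝ) :
    (liftMat R).mulVec x = Fin.cons (x 0) (R.mulVec fun i => x i.succ) := by
  funext i
  induction i using Fin.cases with
  | zero =>
    simp [liftMat, Matrix.mulVec, dotProduct, Fin.sum_univ_succ]
  | succ i' =>
    simp [liftMat, Matrix.mulVec, dotProduct, Fin.sum_univ_succ]

lemma liftMat_det {d : ℕ} (R : Matrix (Fin d) (Fin d) ℝ) : (liftMat R).det = R.det := by
  rw [Matrix.det_succ_row_zero, Fin.sum_univ_succ]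
  have hz : ∀ j : Fin d, (liftMat R) 0 j.succ = 0 := by
    intro j; simp [liftMat]
  have h0 : (liftMat R) 0 0 = 1 := by simp [liftMat]
  have hsub : (liftMat R).submatrix Fin.succ (Fin.succAbove 0) = R := by
    ext i j
    simp [liftMat, Matrix.submatrix_apply, Fin.zero_succAbove]
  simp only [hz, h0, hsub]
  simp

lemma liftMat_mink {d : ℕ} (R : Matrix (Fin d) (Fin d) ℝ)
    (hR : ∀ a b : Fin d → ℝ, ∑ i, R.mulVec a i * R.mulVec b i = ∑ i, a i * b i)
    (x y : Fin (d + 1) → ℝ) :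
    mink ((liftMat R).mulVec x) ((liftMat R).mulVec y) = mink x y := by
  rw [liftMat_mulVec, liftMat_mulVec, mink_cons, hR]
  simp [mink]

lemma orth_of_inner {d : ℕ} (R : Matrix (Fin d) (Fin d) ℝ)
    (hR : ∀ a b : Fin d → ℝ, ∑ i, R.mulVec a i * R.mulVec b i = ∑ i, a i * b i) :
    R * R.transpose = 1 := by
  rw [← mul_eq_one_comm]
  ext i j
  have h := hR (Pi.single i 1) (Pi.single j 1)
  rw [Matrix.mulVec_single, Matrix.mulVec_single] at h
  simp only [Pi.smul_apply, op_smul_eq_mul, Matrix.col_apply] at h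
  have hl : ∑ k, R k i * 1 * (R k j * 1) = ∑ k, R k i * R k j := by
    refine Finset.sum_congr rfl fun k _ => by ring
  rw [hl] at h
  have hr : ∑ k, Pi.single i (1:ℝ) k * Pi.single j (1:ℝ) k
      = if i = j then (1:ℝ) else 0 := by
    rcases eq_or_ne i j with rfl | hij
    · rw [Finset.sum_eq_single i] <;> simp [Pi.single_apply]
    · refine (Finset.sum_eq_zero fun k _ => ?_).trans (by simp [hij])
      rcases eq_or_ne k i with rfl | hk
      · simp [Pi.single_apply, (Ne.symm hij)]
      · simp [Pi.single_apply, hk]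
  rw [hr] at h
  rw [Matrix.mul_apply, Matrix.one_apply]
  rw [← h]
  refine Finset.sum_congr rfl fun k _ => ?_
  simp [Matrix.transpose_apply]

lemma sheet_image {d : ℕ} (A : Matrix (Fin (d + 1)) (Fin (d + 1)) ℝ)
    (g : (Fin (d + 1) → ℝ) → (Fin (d + 1) → ℝ))
    (h1 : ∀ x ∈ hypSheet d, A.mulVec x ∈ hypSheet d)
    (h2 : ∀ y ∈ hypSheet d, g y ∈ hypSheet d)
    (h3 : ∀ y ∈ hypSheet d, A.mulVec (g y) = y) :
    A.mulVec '' hypSheet d = hypSheet d := by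
  apply Set.Subset.antisymm
  · rintro _ ⟨x, hx, rfl⟩; exact h1 x hx
  · intro y hy; exact ⟨g y, h2 y hy, h3 y hy⟩

lemma liftMat_mem {d : ℕ} (R : Matrix (Fin d) (Fin d) ℝ) (hdet : R.det = 1)
    (hR : ∀ a b : Fin d → ℝ, ∑ i, R.mulVec a i * R.mulVec b i = ∑ i, a i * b i) :
    liftMat R ∈ SOplus d := by
  have hRT : ∀ a : Fin d → ℝ, R.mulVec (R.transpose.mulVec a) = a := by
    intro a
    rw [Matrix.mulVec_mulVec, orth_of_inner R hR, Matrix.one_mulVec]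
  refine ⟨by rw [liftMat_det, hdet], liftMat_mink R hR, ?_⟩
  refine sheet_image _ (fun y => Fin.cons (y 0) (R.transpose.mulVec fun i => y i.succ)) ?_ ?_ ?_
  · intro x hx
    refine ⟨?_, ?_⟩
    · rw [liftMat_mink R hR]; exact hx.1
    · rw [liftMat_mulVec]; simpa using hx.2
  · intro y hy
    have hAg : (liftMat R).mulVec (Fin.cons (y 0) (R.transpose.mulVec fun i => y i.succ)) = y := by
      rw [liftMat_mulVec]
      simp only [Fin.cons_zero, Fin.cons_succ]
      rw [hRT]
      exact (Fin.cons_self_tail y)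
    refine ⟨?_, by simpa using hy.2⟩
    have := liftMat_mink R hR (Fin.cons (y 0) (R.transpose.mulVec fun i => y i.succ))
      (Fin.cons (y 0) (R.transpose.mulVec fun i => y i.succ))
    rw [hAg] at this
    rw [← this]
    exact hy.1
  · intro y hy
    rw [liftMat_mulVec]
    simp only [Fin.cons_zero, Fin.cons_succ]
    rw [hRT]
    exact Fin.cons_self_tail y


/-- A Lorentz boost in the (0,1)-plane, with `p = cosh t`, `q = sinh t`. -/
def boostMat {n : ℕ} (p q : ℝ) : Matrix (Fin (n + 2)) (Fin (n + 2)) ℝ :=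
  Matrix.of fun i j =>
    if i = 0 then (if j = 0 then p else if j = 1 then q else 0)
    else if i = 1 then (if j = 0 then q else if j = 1 then p else 0)
    else if i = j then 1 else 0

lemma boostMat_mulVec {n : ℕ} (p q : ℝ) (x : Fin (n + 2) → ℝ) :
    (boostMat p q).mulVec x = fun i =>
      if i = 0 then p * x 0 + q * x 1 else if i = 1 then q * x 0 + p * x 1 else x i := by
  funext i
  rcases eq_or_ne i 0 with rfl | h0
  · simp only [boostMat, Matrix.mulVec, dotProduct, Matrix.of_apply, if_pos rfl]
    rw [Fin.sum_univ_succ, Fin.sum_univ_succ]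
    simp [Fin.succ_zero_eq_one, Fin.succ_succ_ne_one, (Fin.succ_ne_zero _)]
  · rcases eq_or_ne i 1 with rfl | h1
    · simp only [boostMat, Matrix.mulVec, dotProduct, Matrix.of_apply, if_neg h0,
        if_pos rfl, Fin.one_eq_zero_iff]
      rw [Fin.sum_univ_succ, Fin.sum_univ_succ]
      simp [Fin.succ_zero_eq_one, Fin.succ_succ_ne_one, (Fin.succ_ne_zero _), h0]
    · simp only [boostMat, Matrix.mulVec, dotProduct, Matrix.of_apply, if_neg h0,
        if_neg h1]
      rw [Finset.sum_eq_single i]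
      · simp
      · intro b _ hb; simp [Ne.symm hb]
      · simp

lemma boostMat_det {n : ℕ} (p q : ℝ) (hpq : p ^ 2 - q ^ 2 = 1) :
    (boostMat p q : Matrix (Fin (n + 2)) (Fin (n + 2)) ℝ).det = 1 := by
  rw [Matrix.det_succ_row_zero, Fin.sum_univ_succ, Fin.sum_univ_succ]
  have hz : ∀ j : Fin n, (boostMat p q : Matrix (Fin (n+2)) (Fin (n+2)) ℝ) 0 j.succ.succ = 0 := by
    intro j
    simp [boostMat, (Fin.succ_ne_zero _), Fin.succ_succ_ne_one]
  have h00 : (boostMat p q : Matrix (Fin (n+2)) (Fin (n+2)) ℝ) 0 0 = p := by simp [boostMat]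
  have h01 : (boostMat p q : Matrix (Fin (n+2)) (Fin (n+2)) ℝ) 0 ((0 : Fin (n+1)).succ) = q := by
    simp [boostMat, Fin.succ_zero_eq_one]
  have hsub0 : (boostMat p q : Matrix (Fin (n+2)) (Fin (n+2)) ℝ).submatrix Fin.succ
      (Fin.succAbove 0) = Matrix.diagonal (fun i : Fin (n+1) => if i = 0 then p else 1) := by
    ext i j
    simp only [Matrix.submatrix_apply, Fin.zero_succAbove, Matrix.diagonal_apply]
    induction i using Fin.cases with
    | zero =>
      induction j using Fin.cases with
      | zero => simp [boostMat, Fin.succ_zero_eq_one]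
      | succ j' => simp [boostMat, Fin.succ_zero_eq_one, Fin.succ_succ_ne_one,
          (Fin.succ_ne_zero _), (Fin.succ_ne_zero j').symm]
    | succ i' =>
      induction j using Fin.cases with
      | zero => simp [boostMat, Fin.succ_zero_eq_one, Fin.succ_succ_ne_one,
          (Fin.succ_ne_zero _), (Fin.succ_ne_zero i').symm]
      | succ j' => simp [boostMat, (Fin.succ_ne_zero _), Fin.succ_succ_ne_one,
          Fin.succ_inj, (Fin.succ_ne_zero i').symm]
  have hsub1 : (boostMat p q : Matrix (Fin (n+2)) (Fin (n+2)) ℝ).submatrix Fin.succ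
      (Fin.succAbove ((0 : Fin (n+1)).succ)) = Matrix.diagonal
        (fun i : Fin (n+1) => if i = 0 then q else 1) := by
    ext i j
    rw [Fin.succ_zero_eq_one]
    simp only [Matrix.submatrix_apply, Matrix.diagonal_apply]
    induction i using Fin.cases with
    | zero =>
      induction j using Fin.cases with
      | zero => simp [boostMat, Fin.succ_zero_eq_one, Fin.one_succAbove_zero]
      | succ j' => simp [boostMat, Fin.one_succAbove_succ, Fin.succ_zero_eq_one,
          Fin.succ_succ_ne_one, (Fin.succ_ne_zero _), (Fin.succ_ne_zero j').symm]
    | succ i' =>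
      induction j using Fin.cases with
      | zero => simp [boostMat, Fin.one_succAbove_zero, (Fin.succ_ne_zero _),
          Fin.succ_succ_ne_one, (Fin.succ_ne_zero i').symm]
      | succ j' => simp [boostMat, Fin.one_succAbove_succ, (Fin.succ_ne_zero _),
          Fin.succ_succ_ne_one, Fin.succ_inj, (Fin.succ_ne_zero i').symm]
  simp only [hz, h00, h01, hsub0, hsub1, Matrix.det_diagonal]
  simp [Fin.prod_univ_succ, Fin.succ_ne_zero]
  nlinarith [hpq]


lemma boostMat_mink {n : ℕ} (p q : ℝ) (hpq : p ^ 2 - q ^ 2 = 1) (x y : Fin (n + 2) → ℝ) :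
    mink ((boostMat p q).mulVec x) ((boostMat p q).mulVec y) = mink x y := by
  rw [mink_split2, mink_split2, boostMat_mulVec, boostMat_mulVec]
  have h1 : ((1 : Fin (n + 2)) = 0) = False := by simp [Fin.ext_iff]
  have h2 : ((0 : Fin (n + 2)) = 1) = False := by simp [Fin.ext_iff]
  simp only [h1, h2, eq_self_iff_true, if_true, if_false, Fin.succ_ne_zero,
    Fin.succ_succ_ne_one, ite_false, ite_true, if_neg (Fin.succ_ne_zero _),
    if_neg (Fin.succ_succ_ne_one _ )]
  linear_combination (x 0 * y 0 - x 1 * y 1) * hpq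

lemma boostMat_maps {n : ℕ} (p q : ℝ) (hpq : p ^ 2 - q ^ 2 = 1) (hp : 0 < p) :
    ∀ x ∈ hypSheet (n + 1), (boostMat p q).mulVec x ∈ hypSheet (n + 1) := by
  intro x hx
  obtain ⟨hx1, hx0⟩ := hx
  constructor
  · rw [boostMat_mink p q hpq]; exact hx1
  · rw [mink_split2] at hx1
    have hS : 0 ≤ ∑ i : Fin n, x i.succ.succ * x i.succ.succ :=
      Finset.sum_nonneg fun i _ => mul_self_nonneg _
    have hx01 : x 1 * x 1 < x 0 * x 0 := by nlinarith
    have : (boostMat p q).mulVec x 0 = p * x 0 + q * x 1 := by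
      rw [boostMat_mulVec]; simp
    rw [this]
    nlinarith [mul_pos hp hx0, sq_nonneg (p * x 0 + q * x 1), sq_nonneg (p * x 0 - q * x 1),
      sq_nonneg (p - q), sq_nonneg (p + q)]

lemma boostMat_comp {n : ℕ} (p q : ℝ) (hpq : p ^ 2 - q ^ 2 = 1) (y : Fin (n + 2) → ℝ) :
    (boostMat p q).mulVec ((boostMat p (-q)).mulVec y) = y := by
  have h1 : ((1 : Fin (n + 2)) = 0) = False := by simp [Fin.ext_iff]
  have h2 : ((0 : Fin (n + 2)) = 1) = False := by simp [Fin.ext_iff]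
  funext i
  rw [boostMat_mulVec, boostMat_mulVec]
  rcases eq_or_ne i 0 with rfl | h0
  · simp only [h1, h2, eq_self_iff_true, if_true, if_false, ite_true, ite_false]
    linear_combination y 0 * hpq
  · rcases eq_or_ne i 1 with rfl | hone
    · simp only [h1, h2, eq_self_iff_true, if_true, if_false, ite_true, ite_false, if_neg h0]
      linear_combination y 1 * hpq
    · simp only [if_neg h0, if_neg hone, h1, h2, if_false]

lemma boostMat_mem {n : ℕ} (p q : ℝ) (hpq : p ^ 2 - q ^ 2 = 1) (hp : 0 < p) :
    boostMat p q ∈ SOplus (n + 1) := by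
  have hpq' : p ^ 2 - (-q) ^ 2 = 1 := by rw [neg_pow]; simpa using hpq
  refine ⟨boostMat_det p q hpq, boostMat_mink p q hpq, ?_⟩
  exact sheet_image _ ((boostMat p (-q)).mulVec) (boostMat_maps p q hpq hp)
    (boostMat_maps p (-q) hpq' hp) (fun y _ => boostMat_comp p q hpq y)

lemma SOplus_mul {d : ℕ} {A B : Matrix (Fin (d + 1)) (Fin (d + 1)) ℝ}
    (hA : A ∈ SOplus d) (hB : B ∈ SOplus d) : A * B ∈ SOplus d := by
  obtain ⟨hA1, hA2, hA3⟩ := hA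
  obtain ⟨hB1, hB2, hB3⟩ := hB
  refine ⟨by rw [Matrix.det_mul, hA1, hB1, one_mul], fun x y => ?_, ?_⟩
  · rw [← Matrix.mulVec_mulVec, ← Matrix.mulVec_mulVec, hA2, hB2]
  · have h : (A * B).mulVec '' hypSheet d = A.mulVec '' (B.mulVec '' hypSheet d) := by
      rw [Set.image_image]
      exact Set.image_congr fun x _ => (Matrix.mulVec_mulVec x A B).symm
    rw [h, hB3, hA3]

lemma SOplus_inv {d : ℕ} {A : Matrix (Fin (d + 1)) (Fin (d + 1)) ℝ}
    (hA : A ∈ SOplus d) :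
    ∃ B ∈ SOplus d, (∀ x, B.mulVec (A.mulVec x) = x) ∧ ∀ x, A.mulVec (B.mulVec x) = x := by
  obtain ⟨hA1, hA2, hA3⟩ := hA
  have hu : IsUnit A.det := by rw [hA1]; exact isUnit_one
  have hBA : A⁻¹ * A = 1 := Matrix.nonsing_inv_mul A hu
  have hAB : A * A⁻¹ = 1 := Matrix.mul_nonsing_inv A hu
  have hinv1 : ∀ x, A⁻¹.mulVec (A.mulVec x) = x := by
    intro x; rw [Matrix.mulVec_mulVec, hBA, Matrix.one_mulVec]
  have hinv2 : ∀ x, A.mulVec (A⁻¹.mulVec x) = x := by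
    intro x; rw [Matrix.mulVec_mulVec, hAB, Matrix.one_mulVec]
  refine ⟨A⁻¹, ⟨?_, fun x y => ?_, ?_⟩, hinv1, hinv2⟩
  · have := Matrix.det_mul A A⁻¹
    rw [hAB, Matrix.det_one, hA1, one_mul] at this
    exact this.symm
  · have := hA2 (A⁻¹.mulVec x) (A⁻¹.mulVec y)
    rw [hinv2, hinv2] at this
    exact this.symm
  · conv_lhs => rw [← hA3]
    rw [Set.image_image]
    have : (fun x => A⁻¹.mulVec (A.mulVec x)) = id := funext hinv1
    rw [this, Set.image_id]


lemma reduce {e : ℕ} (θ₁ θ₂ : Fin (e + 3) → ℝ) (h₁ : θ₁ ∈ hypParam (e + 2)) :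
    ∃ A ∈ SOplus (e + 2),
      A.mulVec θ₁ = Fin.cons (Real.sqrt (mink θ₁ θ₁)) (0 : Fin (e + 2) → ℝ) ∧
      A.mulVec θ₂ = Fin.cons (mink θ₁ θ₂ / Real.sqrt (mink θ₁ θ₁))
        (Pi.single 0 (Real.sqrt ((mink θ₁ θ₂ / Real.sqrt (mink θ₁ θ₁)) ^ 2 - mink θ₂ θ₂))) := by
  have h₁' : Real.sqrt (∑ i : Fin (e + 2), θ₁ i.succ ^ 2) < θ₁ 0 := h₁
  have hθ0 : 0 < θ₁ 0 := lt_of_le_of_lt (Real.sqrt_nonneg _) h₁'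
  set r : ℝ := Real.sqrt (∑ i : Fin (e + 2), θ₁ i.succ ^ 2) with hrdef
  have hr0 : 0 ≤ r := Real.sqrt_nonneg _
  have hr2 : r ^ 2 = ∑ i : Fin (e + 2), θ₁ i.succ ^ 2 := Real.sq_sqrt (by positivity)
  set a : ℝ := mink θ₁ θ₁ with hadef
  set b : ℝ := mink θ₂ θ₂ with hbdef
  set c : ℝ := mink θ₁ θ₂ with hcdef
  have hsum : ∑ i : Fin (e + 2), θ₁ i.succ * θ₁ i.succ = r ^ 2 := by
    rw [hr2]; exact Finset.sum_congr rfl fun i _ => (pow_two _).symm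
  have har : a = θ₁ 0 * θ₁ 0 - r ^ 2 := by
    rw [hadef, mink, hsum]
  have ha : 0 < a := by nlinarith [h₁', hr0]
  set sa : ℝ := Real.sqrt a with hsadef
  have hsa2 : sa ^ 2 = a := Real.sq_sqrt ha.le
  have hsa : 0 < sa := Real.sqrt_pos.2 ha
  -- Step 1: rotate the spatial part of θ₁ onto the first spatial axis.
  obtain ⟨R₁, hR₁det, hR₁inner, hR₁x⟩ := exists_rot (d := e) (fun i => θ₁ i.succ)
  have hA₁mem : liftMat R₁ ∈ SOplus (e + 2) := liftMat_mem R₁ hR₁det hR₁inner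
  have hy₁ : (liftMat R₁).mulVec θ₁ = Fin.cons (θ₁ 0) (Pi.single 0 r) := by
    rw [liftMat_mulVec, hR₁x]
  -- Step 2: boost to kill the spatial part of θ₁.
  set p : ℝ := θ₁ 0 / sa with hpdef
  set q : ℝ := -r / sa with hqdef
  have hpq : p ^ 2 - q ^ 2 = 1 := by
    have h' : θ₁ 0 ^ 2 - r ^ 2 = a := by linear_combination -har
    rw [hpdef, hqdef, div_pow, div_pow, neg_sq, hsa2, div_sub_div_same, h', div_self ha.ne']
  have hp : 0 < p := div_pos hθ0 hsa
  have hA₂mem : boostMat (n := e + 1) p q ∈ SOplus (e + 2) := boostMat_mem p q hpq hp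
  have hcons1 : (Fin.cons (θ₁ 0) (Pi.single 0 r) : Fin (e + 3) → ℝ) 1 = r := by
    rw [← Fin.succ_zero_eq_one, Fin.cons_succ]; simp
  have hy₂ : (boostMat (n := e + 1) p q).mulVec ((liftMat R₁).mulVec θ₁)
      = Fin.cons sa (0 : Fin (e + 2) → ℝ) := by
    rw [hy₁, boostMat_mulVec]
    funext i
    induction i using Fin.cases with
    | zero =>
      simp only [eq_self_iff_true, if_true, ite_true, Fin.cons_zero, hcons1]
      have step : p * θ₁ 0 + q * r = (θ₁ 0 * θ₁ 0 - r * r) / sa := by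
        rw [hpdef, hqdef]; field_simp; ring
      have h' : θ₁ 0 * θ₁ 0 - r * r = sa * sa := by linear_combination -hsa2 - har
      rw [step, h', mul_div_assoc, div_self hsa.ne', mul_one]
    | succ j =>
      induction j using Fin.cases with
      | zero =>
        rw [Fin.succ_zero_eq_one]
        have hne : ((1 : Fin (e + 3)) = 0) = False := by simp [Fin.ext_iff]
        simp only [hne, if_false, eq_self_iff_true, if_true, ite_true, ite_false,
          Fin.cons_zero, hcons1]
        rw [← Fin.succ_zero_eq_one, Fin.cons_succ, Pi.zero_apply]
        rw [hpdef, hqdef]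
        ring
      | succ k =>
        simp only [if_neg (Fin.succ_ne_zero _), if_neg (Fin.succ_succ_ne_one _),
          Fin.cons_succ]
        simp [Pi.single_apply, (Fin.succ_ne_zero k).symm, Fin.succ_ne_zero]
  set w := (boostMat (n := e + 1) p q).mulVec ((liftMat R₁).mulVec θ₂) with hwdef
  have hmink12 : mink (Fin.cons sa (0 : Fin (e + 2) → ℝ)) w = c := by
    rw [← hy₂, hwdef, hA₂mem.2.1, hA₁mem.2.1]
  have hminkww : mink w w = b := by
    rw [hwdef, hA₂mem.2.1, hA₁mem.2.1]
  have hcw : sa * w 0 = c := by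
    rw [← hmink12]
    simp [mink, Fin.cons_zero, Fin.cons_succ]
  have hw0 : w 0 = c / sa := by
    rw [eq_div_iff hsa.ne']
    linear_combination hcw
  have hwsum : ∑ i : Fin (e + 2), w i.succ ^ 2 = (c / sa) ^ 2 - b := by
    have h1 : w 0 * w 0 - ∑ i : Fin (e + 2), w i.succ * w i.succ = b := by
      rw [← hminkww, mink]
    have h2 : ∑ i : Fin (e + 2), w i.succ * w i.succ
        = ∑ i : Fin (e + 2), w i.succ ^ 2 :=
      Finset.sum_congr rfl fun i _ => (pow_two _).symm
    rw [h2] at h1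
    rw [← hw0]
    linear_combination -h1
  -- Step 3: rotate the spatial part of (the image of) θ₂ onto the first spatial axis.
  obtain ⟨R₂, hR₂det, hR₂inner, hR₂x⟩ := exists_rot (d := e) (fun i => w i.succ)
  have hA₃mem : liftMat R₂ ∈ SOplus (e + 2) := liftMat_mem R₂ hR₂det hR₂inner
  have hA₃θ₁ : (liftMat R₂).mulVec (Fin.cons sa (0 : Fin (e + 2) → ℝ))
      = Fin.cons sa (0 : Fin (e + 2) → ℝ) := by
    rw [liftMat_mulVec]
    have hz : (fun i : Fin (e + 2) =>
        (Fin.cons sa (0 : Fin (e + 2) → ℝ) : Fin (e + 3) → ℝ) i.succ) = 0 := by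
      funext i; simp
    rw [Fin.cons_zero, hz, Matrix.mulVec_zero]
  have hA₃θ₂ : (liftMat R₂).mulVec w
      = Fin.cons (c / sa) (Pi.single 0 (Real.sqrt ((c / sa) ^ 2 - b))) := by
    rw [liftMat_mulVec, hR₂x, hw0, hwsum]
  refine ⟨liftMat R₂ * (boostMat (n := e + 1) p q * liftMat R₁),
    SOplus_mul hA₃mem (SOplus_mul hA₂mem hA₁mem), ?_, ?_⟩
  · rw [← Matrix.mulVec_mulVec, ← Matrix.mulVec_mulVec, hy₂, hA₃θ₁]
  · rw [← Matrix.mulVec_mulVec, ← Matrix.mulVec_mulVec, ← hwdef, hA₃θ₂]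

end MaxInvAux

/-- the map (θ,θ′) ↦ ([θ,θ],[θ′,θ′],[θ,θ′]) is a maximal invariant
of the action of SO₀(1,d) on Θ × Θ. -/
theorem maximal_invariant_SOplus (d : ℕ) (hd : 2 ≤ d) :
    (∀ A ∈ SOplus d, ∀ θ θ' : Fin (d + 1) → ℝ, θ ∈ hypParam d → θ' ∈ hypParam d →
      mink (A.mulVec θ) (A.mulVec θ) = mink θ θ ∧
      mink (A.mulVec θ') (A.mulVec θ') = mink θ' θ' ∧
      mink (A.mulVec θ) (A.mulVec θ') = mink θ θ') ∧
    (∀ θ₁ θ₂ θ₁' θ₂' : Fin (d + 1) → ℝ,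
      θ₁ ∈ hypParam d → θ₂ ∈ hypParam d → θ₁' ∈ hypParam d → θ₂' ∈ hypParam d →
      mink θ₁ θ₁ = mink θ₁' θ₁' → mink θ₂ θ₂ = mink θ₂' θ₂' → mink θ₁ θ₂ = mink θ₁' θ₂' →
      ∃ A ∈ SOplus d, A.mulVec θ₁ = θ₁' ∧ A.mulVec θ₂ = θ₂') := by
  constructor
  · intro A hA θ θ' _ _
    exact ⟨hA.2.1 θ θ, hA.2.1 θ' θ', hA.2.1 θ θ'⟩
  · obtain ⟨e, rfl⟩ : ∃ e, d = e + 2 := ⟨d - 2, by omega⟩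
    intro θ₁ θ₂ θ₁' θ₂' h1 h2 h1' h2' ha hb hc
    obtain ⟨B, hB, hBθ₁, hBθ₂⟩ := MaxInvAux.reduce θ₁ θ₂ h1
    obtain ⟨B', hB', hB'θ₁, hB'θ₂⟩ := MaxInvAux.reduce θ₁' θ₂' h1'
    obtain ⟨C, hC, hCB', _⟩ := MaxInvAux.SOplus_inv hB'
    refine ⟨C * B, MaxInvAux.SOplus_mul hC hB, ?_, ?_⟩
    · rw [← Matrix.mulVec_mulVec, hBθ₁, ha, ← hB'θ₁]
      exact hCB' θ₁'
    · rw [← Matrix.mulVec_mulVec, hBθ₂, hc, ha, hb, ← hB'θ₂]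
      exact hCB' θ₂'
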